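/- arXiv:1402.0302 — 3 statements merged into one kernel-verified Lean document; each statement's English description precedes it below -/
import Mathlib

section
/- Let d ≥ 3, p > 0, and 0 ≤ α < (d−2)/(d−1); set a = 2(d−2)·γ(d,p,α) and b = d−2−α(d−1). Let φ : (0,∞) → ℝ be differentiable with φ ≥ 0, and let v > 0 satisfy 0 < φ(v) < a and suppose the derivative at v of the function g_φ(w) = w^b·φ(w)/(a − φ(w)) is nonnegative. Then Ψ_φ(v) ≤ 0. -/
open Finset

/-- `γ(d,p,α)` from the paper. -/
noncomputable def gam (d : ℕ) (p α : ℝ) : ℝ :=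
  min 1 ((d : ℝ) ^ ((2 - p - α) / p)) * (1 - α * ((d : ℝ) - 1) / ((d : ℝ) - 2))

/-- `Ψ_φ(v)` from the paper. -/
noncomputable def PsiPhi (d : ℕ) (p α : ℝ) (φ : ℝ → ℝ) (v : ℝ) : ℝ :=
  max 1 ((d : ℝ) ^ ((p + α - 2) / p)) * φ v
    - 2 * ((d : ℝ) - 2 - α * ((d : ℝ) - 1)) - 2 * v * deriv φ v / φ v

theorem stmt_6 {d : ℕ} (hd : 3 ≤ d) (p α : ℝ) (hp : 0 < p)
    (hα0 : 0 ≤ α) (hα1 : α < ((d : ℝ) - 2) / ((d : ℝ) - 1))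
    (a b : ℝ) (ha : a = 2 * ((d : ℝ) - 2) * gam d p α)
    (hb : b = (d : ℝ) - 2 - α * ((d : ℝ) - 1))
    (φ : ℝ → ℝ) (hdiff : ∀ v, 0 < v → DifferentiableAt ℝ φ v)
    (hφ : ∀ v, 0 < v → 0 ≤ φ v)
    (v : ℝ) (hv : 0 < v) (h1 : 0 < φ v) (h2 : φ v < a)
    (hg : 0 ≤ deriv (fun w => w ^ b * φ w / (a - φ w)) v) :
    PsiPhi d p α φ v ≤ 0 := by
  have hd3 : (3:ℝ) ≤ (d:ℝ) := by exact_mod_cast hd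
  have hd2 : (0:ℝ) < (d:ℝ) - 2 := by linarith
  have hdpos : (0:ℝ) < (d:ℝ) := by linarith
  set M : ℝ := max 1 ((d : ℝ) ^ ((p + α - 2) / p)) with hM
  have hx : (0:ℝ) < (d:ℝ) ^ ((p + α - 2)/p) := Real.rpow_pos_of_pos hdpos _
  have hM1 : (1:ℝ) ≤ M := le_max_left _ _
  have hMpos : (0:ℝ) < M := lt_of_lt_of_le one_pos hM1
  have hA : 0 < a := lt_trans h1 h2
  have haM : a * M = 2 * b := by
    rw [ha, hb, gam]
    have he : (2 - p - α)/p = -((p + α - 2)/p) := by ring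
    rw [he, Real.rpow_neg hdpos.le]
    have h2' : min 1 ((d:ℝ) ^ ((p + α - 2)/p))⁻¹ = M⁻¹ := by
      rw [hM]
      rcases le_total 1 ((d:ℝ) ^ ((p+α-2)/p)) with h | h
      · rw [max_eq_right h, min_eq_right (inv_le_one_of_one_le₀ h)]
      · rw [max_eq_left h, min_eq_left (one_le_inv_iff₀.mpr ⟨hx, h⟩), inv_one]
    rw [h2']
    field_simp
  -- derivative computation
  have hφd := hdiff v hv
  have hden0 : a - φ v ≠ 0 := by linarith
  have hpow : HasDerivAt (fun w : ℝ => w ^ b) (b * v ^ (b - 1)) v :=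
    Real.hasDerivAt_rpow_const (Or.inl hv.ne')
  have hnum : HasDerivAt (fun w => w ^ b * φ w)
      (b * v^(b-1) * φ v + v^b * deriv φ v) v := hpow.mul hφd.hasDerivAt
  have hdenD : HasDerivAt (fun w => a - φ w) (0 - deriv φ v) v :=
    (hasDerivAt_const v a).sub hφd.hasDerivAt
  have hg' : HasDerivAt (fun w => w ^ b * φ w / (a - φ w))
      (((b * v^(b-1) * φ v + v^b * deriv φ v) * (a - φ v)
        - v^b * φ v * (0 - deriv φ v)) / (a - φ v)^2) v := hnum.div hdenD hden0
  rw [hg'.deriv] at hg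
  have hc2 : (0:ℝ) < (a - φ v)^2 := by positivity
  have hnum0 : 0 ≤ (b * v^(b-1) * φ v + v^b * deriv φ v) * (a - φ v)
      - v^b * φ v * (0 - deriv φ v) := by
    have := (le_div_iff₀ hc2).mp hg
    linarith
  have hvb : v ^ b = v ^ (b-1) * v := by
    rw [← Real.rpow_add_one hv.ne' (b-1)]; ring_nf
  have hvp : (0:ℝ) < v ^ (b-1) := Real.rpow_pos_of_pos hv _
  have hK : 0 ≤ b * φ v * (a - φ v) + a * v * deriv φ v := by
    have heq : (b * v^(b-1) * φ v + v^b * deriv φ v) * (a - φ v)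
        - v^b * φ v * (0 - deriv φ v)
        = v^(b-1) * (b * φ v * (a - φ v) + a * v * deriv φ v) := by
      rw [hvb]; ring
    rw [heq] at hnum0
    nlinarith [hnum0, hvp]
  -- final inequality
  show M * φ v - 2 * ((d:ℝ) - 2 - α * ((d:ℝ) - 1)) - 2 * v * deriv φ v / φ v ≤ 0
  rw [← hb, sub_sub, sub_nonpos, ← sub_le_iff_le_add', le_div_iff₀ h1]
  have h3 : a * M * (φ v)^2 = 2 * b * (φ v)^2 := by
    linear_combination (φ v)^2 * haM
  nlinarith [hK, h3, mul_pos hA h1]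
end

section
/- Let d ≥ 3, n ≥ 1, p > 0, and 0 ≤ α < (d−2)/(d−1); set a = 2(d−2)·γ(d,p,α) and b = d−2−α(d−1). Let φ : (0,∞) → ℝ be differentiable with φ ≥ 0, and let u > 0 satisfy 0 < φ(u) < a and suppose the derivative at u of the function g_φ(w) = w^b·φ(w)/(a − φ(w))^{1+2b/(n+2)} is nonnegative. Then Ψ_φ(u) − 2u·φ'(u)/(n+2) ≤ 0. -/
open Finset

theorem stmt_17 {d n : ℕ} (hd : 3 ≤ d) (hn : 1 ≤ n) (p α : ℝ) (hp : 0 < p)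
    (hα0 : 0 ≤ α) (hα1 : α < ((d : ℝ) - 2) / ((d : ℝ) - 1))
    (a b : ℝ) (ha : a = 2 * ((d : ℝ) - 2) * gam d p α)
    (hb : b = (d : ℝ) - 2 - α * ((d : ℝ) - 1))
    (φ : ℝ → ℝ) (hdiff : ∀ u, 0 < u → DifferentiableAt ℝ φ u)
    (hφ : ∀ u, 0 < u → 0 ≤ φ u)
    (u : ℝ) (hu : 0 < u) (h1 : 0 < φ u) (h2 : φ u < a)
    (hg : 0 ≤ deriv
        (fun w => w ^ b * φ w / (a - φ w) ^ (1 + 2 * b / ((n : ℝ) + 2))) u) :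
    PsiPhi d p α φ u - 2 * u * deriv φ u / ((n : ℝ) + 2) ≤ 0 := by
  have hd3 : (3 : ℝ) ≤ (d : ℝ) := by exact_mod_cast hd
  have hd2 : (0 : ℝ) < (d : ℝ) - 2 := by linarith
  have hd1 : (0 : ℝ) < (d : ℝ) - 1 := by linarith
  have hdpos : (0 : ℝ) < (d : ℝ) := by linarith
  have hbpos : 0 < b := by
    rw [hb]
    have h := (lt_div_iff₀ hd1).mp hα1
    linarith
  -- M and the relation a * M = 2 * b
  set x : ℝ := (d : ℝ) ^ ((p + α - 2) / p) with hx
  have hxpos : 0 < x := Real.rpow_pos_of_pos hdpos _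
  set M : ℝ := max 1 x with hM
  have hM1 : (1 : ℝ) ≤ M := le_max_left _ _
  have hmin : min 1 ((d : ℝ) ^ ((2 - p - α) / p)) * M = 1 := by
    have hinv : (d : ℝ) ^ ((2 - p - α) / p) = x⁻¹ := by
      rw [hx, ← Real.rpow_neg hdpos.le]
      ring_nf
    rw [hinv]
    rcases le_total 1 x with h | h
    · rw [hM, max_eq_right h, min_eq_right (by
        rw [inv_le_one_iff₀]; right; exact h)]
      exact inv_mul_cancel₀ (ne_of_gt hxpos)
    · rw [hM, max_eq_left h, min_eq_left (by
        rw [le_inv_comm₀ one_pos hxpos]; simpa using h)]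
      ring
  have haM : a * M = 2 * b := by
    rw [ha, gam, hb]
    have : ((d : ℝ) - 2) * (1 - α * ((d : ℝ) - 1) / ((d : ℝ) - 2))
        = (d : ℝ) - 2 - α * ((d : ℝ) - 1) := by
      field_simp
    nlinarith [hmin, this]
  have hφv := h1
  have hapos : 0 < a := lt_trans h1 h2
  have ha2b : a ≤ 2 * b := by
    calc a = a * 1 := by ring
    _ ≤ a * M := by nlinarith
    _ = 2 * b := haM
  -- derivative computation
  set s : ℝ := (n : ℝ) + 2 with hs
  have hspos : 0 < s := by positivity
  set c : ℝ := 1 + 2 * b / s with hc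
  set φ' : ℝ := deriv φ u with hφ'
  have hφd : HasDerivAt φ φ' u := (hdiff u hu).hasDerivAt
  have hu0 : u ≠ 0 := ne_of_gt hu
  have hA : 0 < a - φ u := by linarith
  have hnum : HasDerivAt (fun w => w ^ b * φ w)
      (b * u ^ (b - 1) * φ u + u ^ b * φ') u :=
    (Real.hasDerivAt_rpow_const (Or.inl hu0)).mul hφd
  have hden : HasDerivAt (fun w => (a - φ w) ^ c)
      ((0 - φ') * c * (a - φ u) ^ (c - 1)) u :=
    ((hasDerivAt_const u a).sub hφd).rpow_const (Or.inl (ne_of_gt hA))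
  have hdenpos : 0 < (a - φ u) ^ c := Real.rpow_pos_of_pos hA _
  have hdiv := hnum.div hden (ne_of_gt hdenpos)
  rw [show (fun w => w ^ b * φ w / (a - φ w) ^ c) = ((fun w => w ^ b * φ w) / fun w => (a - φ w) ^ c) from rfl, hdiv.deriv] at hg
  have hNum : 0 ≤ (b * u ^ (b - 1) * φ u + u ^ b * φ') * (a - φ u) ^ c
      - u ^ b * φ u * ((0 - φ') * c * (a - φ u) ^ (c - 1)) := by
    have h2pos : 0 < ((a - φ u) ^ c) ^ 2 := by positivity
    have := (le_div_iff₀ h2pos).mp hg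
    linarith [this]
  have hub : u ^ b = u ^ (b - 1) * u := by
    rw [← Real.rpow_add_one hu0]; norm_num
  have hAc : (a - φ u) ^ c = (a - φ u) ^ (c - 1) * (a - φ u) := by
    rw [← Real.rpow_add_one (ne_of_gt hA)]; norm_num
  have hupos : 0 < u ^ (b - 1) := Real.rpow_pos_of_pos hu _
  have hApos : 0 < (a - φ u) ^ (c - 1) := Real.rpow_pos_of_pos hA _
  have hK : 0 ≤ (b * φ u + u * φ') * (a - φ u) + c * u * φ u * φ' := by
    have hfac : (b * u ^ (b - 1) * φ u + u ^ b * φ') * (a - φ u) ^ c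
        - u ^ b * φ u * ((0 - φ') * c * (a - φ u) ^ (c - 1))
        = (u ^ (b - 1) * (a - φ u) ^ (c - 1))
          * ((b * φ u + u * φ') * (a - φ u) + c * u * φ u * φ') := by
      rw [hub, hAc]; ring
    rw [hfac] at hNum
    have hP : 0 < u ^ (b - 1) * (a - φ u) ^ (c - 1) := by positivity
    exact nonneg_of_mul_nonneg_right hNum hP
  -- multiply hK by s to clear the division inside c
  have hK2 : 0 ≤ (b * φ u + u * φ') * (a - φ u) * s + (s + 2 * b) * (u * φ u * φ') := by
    have hcs : s + 2 * b = c * s := by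
      rw [hc]; field_simp
    calc (0:ℝ) ≤ s * ((b * φ u + u * φ') * (a - φ u) + c * u * φ u * φ') :=
          mul_nonneg hspos.le hK
      _ = (b * φ u + u * φ') * (a - φ u) * s + (s + 2 * b) * (u * φ u * φ') := by
          rw [hcs]; ring
  -- key inequality
  have key : 0 ≤ b * φ u * s * (a - φ u) + u * φ' * a * (s + φ u) := by
    rcases le_or_gt φ' 0 with hneg | hpos
    · have hint : 0 ≤ u * φ u * (-φ') * (2 * b - a) :=
        mul_nonneg (mul_nonneg (mul_nonneg hu.le h1.le) (neg_nonneg.2 hneg))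
          (by linarith)
      have heq : b * φ u * s * (a - φ u) + u * φ' * a * (s + φ u)
          = ((b * φ u + u * φ') * (a - φ u) * s + (s + 2 * b) * (u * φ u * φ'))
            + u * φ u * (-φ') * (2 * b - a) := by ring
      rw [heq]
      exact add_nonneg hK2 hint
    · exact add_nonneg (mul_pos (mul_pos (mul_pos hbpos h1) hspos) hA).le
        (mul_pos (mul_pos (mul_pos hu hpos) hapos)
          (by linarith : (0:ℝ) < s + φ u)).le
  -- conclude
  have hMeq : M = 2 * b / a := by
    field_simp at haM ⊢
    linarith [haM]
  have hgoal : PsiPhi d p α φ u - 2 * u * deriv φ u / ((n : ℝ) + 2)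
      = 2 * b / a * φ u - 2 * b - 2 * u * φ' / φ u - 2 * u * φ' / s := by
    rw [PsiPhi, ← hx, ← hM, hMeq, hb, ← hφ', ← hs]
  rw [hgoal]
  have hrw : 2 * b / a * φ u - 2 * b - 2 * u * φ' / φ u - 2 * u * φ' / s
      = (-(2 : ℝ) / (a * φ u * s))
        * (b * φ u * s * (a - φ u) + u * φ' * a * (s + φ u)) := by
    field_simp
    ring
  rw [hrw]
  refine mul_nonpos_of_nonpos_of_nonneg ?_ key
  apply div_nonpos_of_nonpos_of_nonneg (by norm_num)
  positivity
end

section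
/- Let d ≥ 3, n ≥ 1, p > 0, 0 ≤ α < (d−2)/(d−1), and λ > 0; set a = 2(d−2)·γ(d,p,α), b = d−2−α(d−1), and l = b/(1 + 2b/(n+2)). Define φ̃_DS(u) = a/(1 + λ·u^l) for u > 0. Then the function g(u) = u^b·φ̃_DS(u)/(a − φ̃_DS(u))^{1+2b/(n+2)} is monotone nondecreasing on (0,∞). -/
open Finset

theorem stmt_18 {d n : ℕ} (hd : 3 ≤ d) (hn : 1 ≤ n) (p α lam : ℝ) (hp : 0 < p)
    (hα0 : 0 ≤ α) (hα1 : α < ((d : ℝ) - 2) / ((d : ℝ) - 1)) (hlam : 0 < lam)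
    (a b l : ℝ) (ha : a = 2 * ((d : ℝ) - 2) * gam d p α)
    (hb : b = (d : ℝ) - 2 - α * ((d : ℝ) - 1))
    (hl : l = b / (1 + 2 * b / ((n : ℝ) + 2))) :
    MonotoneOn
      (fun u => u ^ b * (a / (1 + lam * u ^ l)) /
        (a - a / (1 + lam * u ^ l)) ^ (1 + 2 * b / ((n : ℝ) + 2)))
      (Set.Ioi (0 : ℝ)) := by
  have hd3 : (3 : ℝ) ≤ (d : ℝ) := by exact_mod_cast hd
  have hd2 : (0 : ℝ) < (d : ℝ) - 2 := by linarith
  have hd1 : (0 : ℝ) < (d : ℝ) - 1 := by linarith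
  have hb0 : 0 < b := by
    rw [hb]
    nlinarith [(lt_div_iff₀ hd1).mp hα1]
  have hgam : 0 < gam d p α := by
    unfold gam
    have h1 : 0 < min 1 ((d : ℝ) ^ ((2 - p - α) / p)) := by
      apply lt_min one_pos
      exact Real.rpow_pos_of_pos (by positivity) _
    have h2 : α * ((d : ℝ) - 1) / ((d : ℝ) - 2) < 1 := by
      rw [div_lt_one hd2]
      nlinarith [(lt_div_iff₀ hd1).mp hα1]
    exact mul_pos h1 (by linarith)
  have ha0 : 0 < a := by rw [ha]; positivity
  set c : ℝ := 1 + 2 * b / ((n : ℝ) + 2) with hc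
  have hn2 : (0 : ℝ) < (n : ℝ) + 2 := by positivity
  have hc1 : 1 < c := by
    rw [hc]
    have : 0 < 2 * b / ((n : ℝ) + 2) := by positivity
    linarith
  have hc0 : 0 < c := by linarith
  have hl0 : 0 < l := by rw [hl]; exact div_pos hb0 hc0
  have hlc : l * c = b := by rw [hl]; exact div_mul_cancel₀ b hc0.ne'
  have key : ∀ u : ℝ, 0 < u →
      u ^ b * (a / (1 + lam * u ^ l)) / (a - a / (1 + lam * u ^ l)) ^ c
        = (a ^ (1 - c) * lam ^ (-c)) * (1 + lam * u ^ l) ^ (c - 1) := by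
    intro u hu
    have ht : 0 < u ^ l := Real.rpow_pos_of_pos hu l
    have hs : 0 < 1 + lam * u ^ l := by positivity
    have hsub : a - a / (1 + lam * u ^ l) = a * lam * u ^ l / (1 + lam * u ^ l) := by
      field_simp; ring
    have hpow : (a * lam * u ^ l / (1 + lam * u ^ l)) ^ c
        = a ^ c * lam ^ c * u ^ b / (1 + lam * u ^ l) ^ c := by
      rw [Real.div_rpow (by positivity) hs.le, Real.mul_rpow (by positivity) ht.le,
        Real.mul_rpow ha0.le hlam.le, ← Real.rpow_mul hu.le, hlc]
    rw [hsub, hpow, Real.rpow_sub ha0, Real.rpow_neg hlam.le, Real.rpow_sub hs,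
      Real.rpow_one, Real.rpow_one]
    have hub : u ^ b ≠ 0 := (Real.rpow_pos_of_pos hu b).ne'
    have hac : (0:ℝ) < a ^ c := Real.rpow_pos_of_pos ha0 c
    have hlc' : (0:ℝ) < lam ^ c := Real.rpow_pos_of_pos hlam c
    have hsc : (0:ℝ) < (1 + lam * u ^ l) ^ c := Real.rpow_pos_of_pos hs c
    field_simp
  intro x hx y hy hxy
  simp only [Set.mem_Ioi] at hx hy
  simp only
  rw [key x hx, key y hy]
  have hbase : 1 + lam * x ^ l ≤ 1 + lam * y ^ l := by
    have := Real.rpow_le_rpow hx.le hxy hl0.le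
    nlinarith
  have h1 : (0:ℝ) < 1 + lam * x ^ l := by positivity
  gcongr
end
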